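/- If σ is a chain decomposed as a disjoint union σ = σ₁ ⊔ σ₂ ⊔ ⋯ into groups of mutually isomorphic connected components (no two groups sharing isomorphic components), and τ is a trivial chain such that σ ⊔ τ is trivial, then σ is itself trivial. -/
import Mathlib

/-!
Chains are modeled by their decomposition into isomorphism classes of connected
components with signed multiplicities: a chain is a finitely supported function
`σ : ι →₀ ℤ` assigning to each isomorphism class `ι` of components its signed
count.  `sym i` records that the components in class `i` admit an
orientation-reversing self-isomorphism.  A chain is *trivial* iff for each
class either the signed count is zero or the class is symmetric.  Disjoint
union is addition.
-/

/-- A chain (given by signed multiplicities of component classes) is trivial. -/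
def IsTrivialChain {ι : Type*} (sym : ι → Prop) (σ : ι →₀ ℤ) : Prop :=
  ∀ i, σ i = 0 ∨ sym i

/-- If `τ` is a trivial chain and the disjoint union `σ ⊔ τ` is trivial,
then `σ` is itself trivial. -/
theorem trivial_of_union_trivial {ι : Type*} (sym : ι → Prop) (σ τ : ι →₀ ℤ)
    (hτ : IsTrivialChain sym τ) (hστ : IsTrivialChain sym (σ + τ)) :
    IsTrivialChain sym σ := by
  intro i
  rcases hστ i with h | h
  · rcases hτ i with h' | h'
    · left; simpa [Finsupp.add_apply, h'] using h
    · exact Or.inr h'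
  · exact Or.inr h
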